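/- Let J_k be the interval graph of the intervals h_i^j = ((j−1)/i, j/i), 1 ≤ j ≤ i ≤ k. If a proper coloring of J_k realizes the distribution with class sizes exactly (k, k−1, ..., 2, 1), then each color class is exactly one row of J_k, i.e., each row {h_i^j : 1 ≤ j ≤ i} is monochromatic. -/

import Mathlib

open scoped BigOperators
open Finset MeasureTheory

/-- Vertices of `J k`: the pair `⟨i, j⟩ : (i : Fin k) × Fin (i+1)` represents the
interval `h_{i+1}^{j+1} = (j/(i+1), (j+1)/(i+1))`. -/
abbrev Jvert (k : ℕ) := (i : Fin k) × Fin (i.1 + 1)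

/-- The open interval associated with a vertex of `J k`. -/
def Jinterval {k : ℕ} (v : Jvert k) : Set ℝ :=
  Set.Ioo ((v.2 : ℝ) / ((v.1 : ℕ) + 1)) (((v.2 : ℕ) + 1) / ((v.1 : ℕ) + 1))

/-- The intersection graph `J k` of the intervals `h_i^j = ((j-1)/i, j/i)`,
`1 ≤ j ≤ i ≤ k`. -/
def Jgraph (k : ℕ) : SimpleGraph (Jvert k) where
  Adj a b := a ≠ b ∧ (Jinterval a ∩ Jinterval b).Nonempty
  symm := by
    constructor
    intro a b ⟨h1, h2⟩
    exact ⟨h1.symm, by rwa [Set.inter_comm]⟩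
  loopless := by
    constructor
    intro a ⟨h, _⟩
    exact h rfl


/-- If a proper coloring of `J k` realizes the size distribution
`(k, k-1, …, 2, 1)`, then each color class is exactly one row of `J k`;
in particular each row is monochromatic. -/
lemma Jvol {k : ℕ} (v : Jvert k) :
    volume (Jinterval v) = ENNReal.ofReal (1 / ((v.1 : ℕ) + 1)) := by
  rw [Jinterval, Real.volume_Ioo]
  congr 1
  rw [div_sub_div_same]
  ring_nf

lemma Jsub {k : ℕ} (v : Jvert k) : Jinterval v ⊆ Set.Icc 0 1 := by
  rw [Jinterval]
  refine Set.Ioo_subset_Icc_self.trans (Set.Icc_subset_Icc ?_ ?_)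
  · positivity
  · rw [div_le_one (by positivity)]
    have h := Nat.lt_succ_iff.mp v.2.2
    exact_mod_cast Nat.add_le_add_right h 1

lemma sum_inv_le_one {k : ℕ} (S : Finset (Jvert k))
    (hd : (S : Set (Jvert k)).PairwiseDisjoint Jinterval) :
    ∑ v ∈ S, (1:ℝ) / ((v.1 : ℕ) + 1) ≤ 1 := by
  have h1 : ∑ v ∈ S, volume (Jinterval v) = volume (⋃ v ∈ S, Jinterval v) :=
    (measure_biUnion_finset hd (fun v _ => measurableSet_Ioo)).symm
  have h2 : volume (⋃ v ∈ S, Jinterval v) ≤ volume (Set.Icc (0:ℝ) 1) :=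
    measure_mono (Set.iUnion₂_subset fun v _ => Jsub v)
  rw [Real.volume_Icc] at h2
  simp only [Jvol] at h1
  rw [← ENNReal.ofReal_sum_of_nonneg (fun v _ => by positivity)] at h1
  rw [← h1, show (1:ℝ)-0 = 1 by ring] at h2
  exact (ENNReal.ofReal_le_ofReal_iff (by norm_num)).mp h2

def Jrow (k i : ℕ) : Finset (Jvert k) := univ.filter (fun v => (v.1 : ℕ) = i)

lemma Jrow_card {k i : ℕ} (hi : i < k) : (Jrow k i).card = i + 1 := by
  have : Jrow k i = (Finset.univ : Finset (Fin (i+1))).map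
      ⟨fun j => ⟨⟨i, hi⟩, j⟩, fun a b h => by
        simpa using h⟩ := by
    ext v
    simp only [Jrow, mem_filter, mem_univ, true_and, Finset.mem_map,
      Function.Embedding.coeFn_mk]
    constructor
    · rintro hv
      obtain ⟨⟨i1, hi1⟩, j⟩ := v
      simp at hv
      subst hv
      exact ⟨j, rfl⟩
    · rintro ⟨j, _, rfl⟩; rfl
  rw [this, Finset.card_map, Finset.card_univ, Fintype.card_fin]

theorem stmt_11 (k : ℕ) (φ : Jvert k → ℕ)
    (hφ : ∀ a b, (Jgraph k).Adj a b → φ a ≠ φ b)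
    (c : Fin k → ℕ) (hcinj : Function.Injective c)
    (hsize : ∀ t : Fin k,
      (Finset.univ.filter (fun v : Jvert k => φ v = c t)).card = k - t)
    (hused : ∀ v : Jvert k, ∃ t, φ v = c t) :
    ∀ (i : Fin k) (j j' : Fin (i.1 + 1)), φ ⟨i, j⟩ = φ ⟨i, j'⟩ := by
  classical
  set C : Fin k → Finset (Jvert k) :=
    fun t => Finset.univ.filter (fun v => φ v = c t) with hC
  have hdisj : ∀ t : Fin k, ((C t : Set (Jvert k))).PairwiseDisjoint Jinterval := by
    intro t a ha b hb hab
    simp only [hC, coe_filter, Set.mem_setOf_eq, mem_univ, true_and] at ha hb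
    have hnadj : ¬ (Jgraph k).Adj a b := fun h => hφ a b h (ha.trans hb.symm)
    have h : ¬ (Jinterval a ∩ Jinterval b).Nonempty := fun hn => hnadj ⟨hab, hn⟩
    rw [Set.not_nonempty_iff_eq_empty] at h
    exact Set.disjoint_iff_inter_eq_empty.mpr h
  have key : ∀ n : ℕ, ∀ t : Fin k, t.1 = n → C t = Jrow k (k - 1 - n) := by
    intro n
    induction n using Nat.strong_induction_on with
    | _ n IH =>
      intro t ht
      have htk : n < k := ht ▸ t.2
      have hle : ∀ v ∈ C t, (v.1 : ℕ) + 1 ≤ k - n := by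
        intro v hv
        by_contra hgt
        push_neg at hgt
        have hvk : (v.1 : ℕ) < k := v.1.2
        have hsn : k - 1 - (v.1 : ℕ) < n := by omega
        have hsk : k - 1 - (v.1 : ℕ) < k := by omega
        have hrow := IH _ hsn ⟨k - 1 - (v.1 : ℕ), hsk⟩ rfl
        have hvrow : v ∈ Jrow k (k - 1 - (k - 1 - (v.1 : ℕ))) := by
          simp only [Jrow, mem_filter, mem_univ, true_and]; omega
        rw [← hrow] at hvrow
        simp only [hC, mem_filter, mem_univ, true_and] at hvrow hv
        have h1 : (⟨k - 1 - (v.1 : ℕ), hsk⟩ : Fin k) = t := hcinj (hvrow.symm.trans hv)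
        have h2 : k - 1 - (v.1 : ℕ) = n := by rw [← ht]; exact congrArg Fin.val h1
        omega
      have hcard : (C t).card = k - n := by rw [hC]; rw [← ht]; exact hsize t
      have heq : ∀ v ∈ C t, (v.1 : ℕ) + 1 = k - n := by
        by_contra hex
        push_neg at hex
        obtain ⟨v0, hv0, hne⟩ := hex
        have hm0 : (0:ℝ) < ((v0.1 : ℕ) : ℝ) + 1 := by positivity
        have hlt : (1:ℝ)/((k - n : ℕ):ℝ) < 1/(((v0.1 : ℕ):ℝ)+1) := by
          apply one_div_lt_one_div_of_lt hm0
          have := hle v0 hv0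
          have h3 : (v0.1 : ℕ) + 1 < k - n := by omega
          exact_mod_cast h3
        have hsum := sum_inv_le_one (C t) (hdisj t)
        have h2 : ∑ _v ∈ C t, (1:ℝ)/((k - n : ℕ):ℝ) < ∑ v ∈ C t, (1:ℝ)/(((v.1 : ℕ):ℝ)+1) := by
          apply Finset.sum_lt_sum ?_ ⟨v0, hv0, hlt⟩
          intro v hv
          apply one_div_le_one_div_of_le (by positivity)
          exact_mod_cast hle v hv
        rw [Finset.sum_const, hcard, nsmul_eq_mul] at h2
        have hmne : ((k - n : ℕ):ℝ) ≠ 0 := by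
          have : 0 < k - n := by omega
          positivity
        rw [mul_one_div_cancel hmne] at h2
        have : ∑ v ∈ C t, (1:ℝ)/(((v.1 : ℕ):ℝ)+1) ≤ 1 := by exact_mod_cast hsum
        linarith
      have hsub : C t ⊆ Jrow k (k - 1 - n) := by
        intro v hv
        simp only [Jrow, mem_filter, mem_univ, true_and]
        have := heq v hv
        omega
      exact Finset.eq_of_subset_of_card_le hsub
        (by rw [Jrow_card (show k - 1 - n < k by omega), hcard]; omega)
  intro i j j'
  obtain ⟨t, ht⟩ := hused ⟨i, j⟩
  have h1 : (⟨i,j⟩ : Jvert k) ∈ C t := by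
    simp only [hC, mem_filter, mem_univ, true_and]; exact ht
  rw [key t.1 t rfl] at h1
  simp only [Jrow, mem_filter, mem_univ, true_and] at h1
  have h2 : (⟨i,j'⟩ : Jvert k) ∈ C t := by
    rw [key t.1 t rfl]
    simp only [Jrow, mem_filter, mem_univ, true_and]
    exact h1
  simp only [hC, mem_filter, mem_univ, true_and] at h2
  rw [ht, h2]
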